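/- Function value convergence at the averaged iterate of iBPG: under the standing assumptions, if (1/k)Σ_{i=0}^{k-1} η_i(‖x̃^{i+1}‖+1) → 0, (1/k)Σ_{i=0}^{k-1} μ_i → 0 and (1/k)Σ_{i=0}^{k-1} ν_i → 0, then F( (1/k)Σ_{i=0}^{k-1} x̃^{i+1} ) → F* as k → ∞, where F* := inf{F(x) : x ∈ Q} > −∞. -/

import Mathlib

open Filter Topology RealInnerProductSpace

/-- The Bregman distance associated with the kernel `φ` whose gradient map is `gφ`. -/
noncomputable def breg {E : Type*} [NormedAddCommGroup E] [InnerProductSpace ℝ E]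
    (φ : E → ℝ) (gφ : E → E) (x y : E) : ℝ :=
  φ x - φ y - ⟪gφ y, x - y⟫

/-- The ν-subdifferential of `P` (a proper function with effective domain `domP`) at `x`. -/
def nuSubdiff {E : Type*} [NormedAddCommGroup E] [InnerProductSpace ℝ E]
    (P : E → ℝ) (domP : Set E) (ν : ℝ) (x : E) : Set E :=
  {d : E | ∀ u ∈ domP, P x + ⟪d, u - x⟫ - ν ≤ P u}

open Classical in
/-- Extension of a real-valued function with effective domain `dom` to an `EReal`-valued
function taking the value `⊤` outside `dom`. -/
noncomputable def extFun {E : Type*} (g : E → ℝ) (dom : Set E) : E → EReal :=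
  fun x => if x ∈ dom then (g x : EReal) else ⊤

/-- `φ` (with effective domain `domφ` and gradient map `gφ`) is essentially smooth. -/
def EssentiallySmooth {E : Type*} [NormedAddCommGroup E] [InnerProductSpace ℝ E]
    [FiniteDimensional ℝ E] (φ : E → ℝ) (domφ : Set E) (gφ : E → E) : Prop :=
  (interior domφ).Nonempty ∧
  (∀ x ∈ interior domφ, HasGradientAt φ (gφ x) x) ∧
  ∀ (u : ℕ → E) (u₀ : E), (∀ n, u n ∈ interior domφ) →
    Tendsto u atTop (𝓝 u₀) → u₀ ∈ frontier (interior domφ) →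
    Tendsto (fun n => ‖gφ (u n)‖) atTop atTop

/-- The standing assumptions (Assumption A) for the problem `inf {P x + f x : x ∈ Q}`. -/
structure Standing {E : Type*} [NormedAddCommGroup E] [InnerProductSpace ℝ E]
    [FiniteDimensional ℝ E] (Q domφ domP domf X : Set E)
    (φ P f : E → ℝ) (gφ gf : E → E) (L : ℝ) : Prop where
  hQclosed : IsClosed Q
  hQconv : Convex ℝ Q
  hQint : (interior Q).Nonempty
  hφconv : ConvexOn ℝ domφ φ
  hφstrict : StrictConvexOn ℝ (interior domφ) φ
  hφsmooth : EssentiallySmooth φ domφ gφ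
  hφQ : closure domφ = Q
  hPne : domP.Nonempty
  hPconv : ConvexOn ℝ domP P
  hPclosed : LowerSemicontinuous (extFun P domP)
  hPQ : (domP ∩ interior Q).Nonempty
  hfconv : ConvexOn ℝ domf f
  hfclosed : LowerSemicontinuous (extFun f domf)
  hfdom : domφ ⊆ domf
  hfgrad : ∀ x ∈ interior domφ, HasGradientAt f (gf x) x
  hXclosed : IsClosed X
  hXconv : Convex ℝ X
  hXsup : domP ∩ domφ ⊆ X
  hLnn : 0 ≤ L
  hrel : ∀ u ∈ interior domφ ∩ X, ∀ v ∈ domφ ∩ X,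
    f v ≤ f u + ⟪gf u, v - u⟫ + L * breg φ gφ v u

/-- The iBPG iterates with inexactness tolerance sequences `η`, `μ`, `ν`. -/
structure IBPGIter {E : Type*} [NormedAddCommGroup E] [InnerProductSpace ℝ E]
    [FiniteDimensional ℝ E] (domφ domP X : Set E) (φ P : E → ℝ) (gφ gf : E → E) (L : ℝ)
    (η μ ν : ℕ → ℝ) (x xt : ℕ → E) : Prop where
  hη : ∀ k, 0 ≤ η k
  hμ : ∀ k, 0 ≤ μ k
  hν : ∀ k, 0 ≤ ν k
  hx : ∀ k, x k ∈ X ∩ interior domφ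
  hxt : ∀ k, xt k ∈ domP ∩ domφ
  hinex : ∀ k, ∃ d ∈ nuSubdiff P domP (ν k) (xt (k+1)),
    ‖d + gf (x k) + L • (gφ (x (k+1)) - gφ (x k))‖ ≤ η k
  hdist : ∀ k, breg φ gφ (xt (k+1)) (x (k+1)) ≤ μ k

lemma grad_ineq {E : Type*} [NormedAddCommGroup E] [InnerProductSpace ℝ E] [CompleteSpace E]
    {s : Set E} {g : E → ℝ} (hg : ConvexOn ℝ s g)
    {x G : E} (hx : x ∈ s) (hG : HasGradientAt g G x) {u : E} (hu : u ∈ s) :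
    g x + ⟪G, u - x⟫ ≤ g u := by
  have hline : HasDerivAt (fun t : ℝ => g (x + t • (u - x))) ⟪G, u - x⟫ 0 := by
    have hc : HasDerivAt (fun t : ℝ => x + t • (u - x)) (u - x) 0 := by
      simpa using ((hasDerivAt_id (0:ℝ)).smul_const (u - x)).const_add x
    have hG' : HasFDerivAt g ((InnerProductSpace.toDual ℝ E) G) (x + (0:ℝ) • (u - x)) := by
      simpa using hG.hasFDerivAt
    have := hG'.comp_hasDerivAt 0 hc
    exact this
  have hslope : Tendsto (slope (fun t : ℝ => g (x + t • (u - x))) 0) (𝓝[>] (0:ℝ))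
      (𝓝 ⟪G, u - x⟫) :=
    (hasDerivAt_iff_tendsto_slope.1 hline).mono_left
      (nhdsWithin_mono _ (by intro t ht; exact ne_of_gt ht : Set.Ioi (0:ℝ) ⊆ {(0:ℝ)}ᶜ))
  have hbound : ∀ᶠ t in 𝓝[>] (0:ℝ), slope (fun t : ℝ => g (x + t • (u - x))) 0 t
      ≤ g u - g x := by
    filter_upwards [Ioc_mem_nhdsGT one_pos] with t ht
    have hcomb : g (x + t • (u - x)) ≤ (1 - t) * g x + t * g u := by
      have := hg.2 hx hu (by linarith [ht.2] : (0:ℝ) ≤ 1 - t) (le_of_lt ht.1) (by ring)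
      have heq : (1 - t) • x + t • u = x + t • (u - x) := by
        simp [smul_sub, sub_smul]; abel
      simpa [heq, smul_eq_mul] using this
    have : slope (fun t : ℝ => g (x + t • (u - x))) 0 t
        = (g (x + t • (u - x)) - g x) / t := by
      simp [slope_def_field]
    rw [this, div_le_iff₀ ht.1]
    nlinarith [ht.1]
  have := le_of_tendsto hslope hbound
  linarith

lemma three_point {E : Type*} [NormedAddCommGroup E] [InnerProductSpace ℝ E]
    (φ : E → ℝ) (gφ : E → E) (a b u c : E) :
    ⟪gφ b - gφ a, u - c⟫ =
      breg φ gφ u a - breg φ gφ u b - breg φ gφ c a + breg φ gφ c b := by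
  simp only [breg, inner_sub_left, inner_sub_right]
  ring

lemma mem_interior_of_mem_interior_closure {E : Type*} [NormedAddCommGroup E]
    [NormedSpace ℝ E] {s : Set E} (hs : Convex ℝ s) {z x : E}
    (hz : z ∈ interior s) (hx : x ∈ interior (closure s)) : x ∈ interior s := by
  obtain ⟨ε, hε, hb⟩ := Metric.isOpen_iff.1 isOpen_interior x hx
  obtain ⟨δ, hδ, hδε⟩ : ∃ δ : ℝ, 0 < δ ∧ δ * ‖x - z‖ < ε :=
    ⟨ε / (2 * (‖x - z‖ + 1)), by positivity, by
      rw [div_mul_eq_mul_div, div_lt_iff₀ (by positivity)]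
      nlinarith [norm_nonneg (x - z)]⟩
  have h1δ : (1:ℝ) + δ ≠ 0 := by positivity
  have hy : x + δ • (x - z) ∈ closure s := by
    apply interior_subset
    apply hb
    have : dist (x + δ • (x - z)) x = δ * ‖x - z‖ := by
      rw [dist_eq_norm]
      simp [norm_smul, abs_of_pos hδ]
    rw [Metric.mem_ball, this]
    exact hδε
  have hcomb := hs.combo_interior_closure_mem_interior hz hy
    (a := δ / (1 + δ)) (b := 1 / (1 + δ))
    (by positivity) (by positivity) (by rw [← add_div, add_comm δ 1, div_self h1δ])
  have heq : (δ / (1 + δ)) • z + (1 / (1 + δ)) • (x + δ • (x - z)) = x := by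
    apply smul_right_injective E h1δ
    show (1+δ) • ((δ / (1 + δ)) • z + (1 / (1 + δ)) • (x + δ • (x - z))) = (1+δ) • x
    rw [smul_add, smul_smul, smul_smul, mul_div_cancel₀ _ h1δ, mul_one_div_cancel h1δ]
    module
  rwa [heq] at hcomb

/-- **Function value convergence at the averaged iterate of iBPG** (Theorem 3.1(ii)). Under the
standing assumptions, if `(1/k) Σ_{i<k} η_i (‖x̃^{i+1}‖+1) → 0`, `(1/k) Σ_{i<k} μ_i → 0` and
`(1/k) Σ_{i<k} ν_i → 0`, then `F((1/k) Σ_{i<k} x̃^{i+1}) → F*`, where `F = P + f` and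
`F* = inf {F x : x ∈ Q} > −∞`. -/
theorem iBPG_averaged_value_convergence
    {E : Type*} [NormedAddCommGroup E] [InnerProductSpace ℝ E] [FiniteDimensional ℝ E]
    (Q domφ domP domf X : Set E) (φ P f : E → ℝ) (gφ gf : E → E) (L : ℝ)
    (hstand : Standing Q domφ domP domf X φ P f gφ gf L)
    (η μ ν : ℕ → ℝ) (x xt : ℕ → E)
    (hiter : IBPGIter domφ domP X φ P gφ gf L η μ ν x xt)
    (Fstar : ℝ) (hFstar : IsGLB ((fun u => P u + f u) '' (domP ∩ domf ∩ Q)) Fstar)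
    (h1 : Tendsto (fun k : ℕ => (k : ℝ)⁻¹ * ∑ i ∈ Finset.range k, η i * (‖xt (i+1)‖ + 1))
            atTop (𝓝 0))
    (h2 : Tendsto (fun k : ℕ => (k : ℝ)⁻¹ * ∑ i ∈ Finset.range k, μ i) atTop (𝓝 0))
    (h3 : Tendsto (fun k : ℕ => (k : ℝ)⁻¹ * ∑ i ∈ Finset.range k, ν i) atTop (𝓝 0)) :
    Tendsto (fun k : ℕ =>
        P ((k : ℝ)⁻¹ • ∑ i ∈ Finset.range k, xt (i+1))
          + f ((k : ℝ)⁻¹ • ∑ i ∈ Finset.range k, xt (i+1)))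
      atTop (𝓝 Fstar) := by
  classical
  obtain ⟨hQcl, hQconv, hQint, hφconv, hφstrict, hφsm, hφQ, hPne, hPconv, hPcl, hPQ,
    hfconv, hfcl, hfdom, hfgrad, hXcl, hXconv, hXsup, hLnn, hrel⟩ := hstand
  obtain ⟨hη, hμ, hν, hx, hxt, hinex, hdist⟩ := hiter
  set F : E → ℝ := fun u => P u + f u with hFdef
  clear_value F
  have hdomφconv : Convex ℝ domφ := hφconv.1
  have hφgrad : ∀ y ∈ interior domφ, HasGradientAt φ (gφ y) y := hφsm.2.1
  have hIntQsub : interior Q ⊆ interior domφ := by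
    intro w hw
    obtain ⟨z, hz⟩ := hφsm.1
    rw [← hφQ] at hw
    exact mem_interior_of_mem_interior_closure hdomφconv hz hw
  have hdomφQ : domφ ⊆ Q := hφQ ▸ subset_closure
  have hPDconv : Convex ℝ (domP ∩ domf) := hPconv.1.inter hfconv.1
  have hFconv : ConvexOn ℝ (domP ∩ domf) F := by
    rw [hFdef]
    exact (hPconv.subset Set.inter_subset_left hPDconv).add
      (hfconv.subset Set.inter_subset_right hPDconv)
  have hxtmem : ∀ i : ℕ, xt (i+1) ∈ domP ∩ domf ∩ Q := fun i =>
    ⟨⟨(hxt (i+1)).1, hfdom (hxt (i+1)).2⟩, hdomφQ (hxt (i+1)).2⟩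
  have hbreg_nonneg : ∀ v ∈ domφ, ∀ y ∈ interior domφ, 0 ≤ breg φ gφ v y := by
    intro v hv y hy
    have := grad_ineq hφconv (interior_subset hy) (hφgrad y hy) hv
    simp only [breg]
    linarith
  have key : ∀ u ∈ domP ∩ domφ, ∀ k : ℕ,
      F (xt (k+1)) ≤ F u + L * (breg φ gφ u (x k) - breg φ gφ u (x (k+1)))
        + ((‖u‖ + 1) * (η k * (‖xt (k+1)‖ + 1)) + L * μ k + ν k) := by
    intro u hu k
    obtain ⟨d, hd, hΔ⟩ := hinex k
    have hxk := hx k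
    have hxtk := hxt (k+1)
    have hP1 : P (xt (k+1)) + ⟪d, u - xt (k+1)⟫ - ν k ≤ P u := hd u hu.1
    have hfu : f (x k) + ⟪gf (x k), u - x k⟫ ≤ f u :=
      grad_ineq hfconv (hfdom (interior_subset hxk.2)) (hfgrad (x k) hxk.2) (hfdom hu.2)
    have hrel1 : f (xt (k+1)) ≤ f (x k) + ⟪gf (x k), xt (k+1) - x k⟫
        + L * breg φ gφ (xt (k+1)) (x k) :=
      hrel (x k) ⟨hxk.2, hxk.1⟩ (xt (k+1)) ⟨hxtk.2, hXsup hxtk⟩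
    have h3ptL : L * ⟪gφ (x (k+1)) - gφ (x k), u - xt (k+1)⟫
        = L * breg φ gφ u (x k) - L * breg φ gφ u (x (k+1))
          - L * breg φ gφ (xt (k+1)) (x k) + L * breg φ gφ (xt (k+1)) (x (k+1)) := by
      rw [three_point φ gφ (x k) (x (k+1)) u (xt (k+1))]
      ring
    have hdec : ⟪d + gf (x k) + L • (gφ (x (k+1)) - gφ (x k)), u - xt (k+1)⟫
        = ⟪d, u - xt (k+1)⟫ + ⟪gf (x k), u - xt (k+1)⟫
          + L * ⟪gφ (x (k+1)) - gφ (x k), u - xt (k+1)⟫ := by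
      simp [inner_add_left, real_inner_smul_left]
    have hsplit : ⟪gf (x k), u - xt (k+1)⟫
        = ⟪gf (x k), u - x k⟫ - ⟪gf (x k), xt (k+1) - x k⟫ := by
      simp only [inner_sub_right]
      ring
    have hcs : -((‖u‖ + 1) * (η k * (‖xt (k+1)‖ + 1)))
        ≤ ⟪d + gf (x k) + L • (gφ (x (k+1)) - gφ (x k)), u - xt (k+1)⟫ := by
      have hip := abs_real_inner_le_norm (d + gf (x k) + L • (gφ (x (k+1)) - gφ (x k)))
        (u - xt (k+1))
      have h2' : ‖u - xt (k+1)‖ ≤ (‖u‖ + 1) * (‖xt (k+1)‖ + 1) := by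
        have := norm_sub_le u (xt (k+1))
        nlinarith [norm_nonneg u, norm_nonneg (xt (k+1))]
      have h3' : ‖d + gf (x k) + L • (gφ (x (k+1)) - gφ (x k))‖ * ‖u - xt (k+1)‖
          ≤ η k * ((‖u‖ + 1) * (‖xt (k+1)‖ + 1)) :=
        mul_le_mul hΔ h2' (norm_nonneg _) (hη k)
      have hneg := neg_abs_le ⟪d + gf (x k) + L • (gφ (x (k+1)) - gφ (x k)), u - xt (k+1)⟫
      nlinarith
    have hμ1 : L * breg φ gφ (xt (k+1)) (x (k+1)) ≤ L * μ k :=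
      mul_le_mul_of_nonneg_left (hdist k) hLnn
    simp only [hFdef]
    linarith [hP1, hfu, hrel1, h3ptL, hdec, hsplit, hcs, hμ1]
  have hsum : ∀ u ∈ domP ∩ domφ, ∀ k : ℕ,
      ∑ i ∈ Finset.range k, F (xt (i+1))
        ≤ k * F u + L * breg φ gφ u (x 0)
          + ((‖u‖ + 1) * (∑ i ∈ Finset.range k, η i * (‖xt (i+1)‖ + 1))
            + L * (∑ i ∈ Finset.range k, μ i) + ∑ i ∈ Finset.range k, ν i) := by
    intro u hu k
    have hs := Finset.sum_le_sum (fun i (_ : i ∈ Finset.range k) => key u hu i)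
    have htel : ∑ i ∈ Finset.range k,
        (breg φ gφ u (x i) - breg φ gφ u (x (i+1)))
        = breg φ gφ u (x 0) - breg φ gφ u (x k) :=
      Finset.sum_range_sub' (fun i => breg φ gφ u (x i)) k
    have hBk : 0 ≤ L * breg φ gφ u (x k) :=
      mul_nonneg hLnn (hbreg_nonneg u hu.2 (x k) (hx k).2)
    have hrhs : ∑ i ∈ Finset.range k,
        (F u + L * (breg φ gφ u (x i) - breg φ gφ u (x (i+1)))
          + ((‖u‖ + 1) * (η i * (‖xt (i+1)‖ + 1)) + L * μ i + ν i))
        = k * F u + L * (breg φ gφ u (x 0) - breg φ gφ u (x k))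
          + ((‖u‖ + 1) * (∑ i ∈ Finset.range k, η i * (‖xt (i+1)‖ + 1))
            + L * (∑ i ∈ Finset.range k, μ i) + ∑ i ∈ Finset.range k, ν i) := by
      simp only [Finset.sum_add_distrib, Finset.sum_const, Finset.card_range,
        nsmul_eq_mul, ← Finset.mul_sum, htel]
    rw [hrhs] at hs
    linarith
  have hjensen : ∀ k : ℕ, 1 ≤ k →
      F ((k : ℝ)⁻¹ • ∑ i ∈ Finset.range k, xt (i+1))
        ≤ (k : ℝ)⁻¹ * ∑ i ∈ Finset.range k, F (xt (i+1)) := by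
    intro k hk
    have hkpos : (0:ℝ) < (k:ℝ) := Nat.cast_pos.2 hk
    have hw1 : ∑ _i ∈ Finset.range k, (k:ℝ)⁻¹ = 1 := by
      rw [Finset.sum_const, Finset.card_range, nsmul_eq_mul, mul_inv_cancel₀ hkpos.ne']
    have hJ := hFconv.map_sum_le (t := Finset.range k) (w := fun _ => (k:ℝ)⁻¹)
      (p := fun i => xt (i+1)) (fun i _ => inv_nonneg.2 hkpos.le) hw1
      (fun i _ => (hxtmem i).1)
    rw [← Finset.smul_sum] at hJ
    simp only [smul_eq_mul] at hJ
    rw [← Finset.mul_sum] at hJ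
    exact hJ
  have havg : ∀ k : ℕ, 1 ≤ k →
      ((k : ℝ)⁻¹ • ∑ i ∈ Finset.range k, xt (i+1)) ∈ domP ∩ domφ := by
    intro k hk
    have hkpos : (0:ℝ) < (k:ℝ) := Nat.cast_pos.2 hk
    have hw1 : ∑ _i ∈ Finset.range k, (k:ℝ)⁻¹ = 1 := by
      rw [Finset.sum_const, Finset.card_range, nsmul_eq_mul, mul_inv_cancel₀ hkpos.ne']
    have := (hPconv.1.inter hdomφconv).sum_mem (fun i _ => inv_nonneg.2 hkpos.le) hw1
      (fun i (_ : i ∈ Finset.range k) => hxt (i+1))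
    rwa [← Finset.smul_sum] at this
  have hlb : ∀ k : ℕ, 1 ≤ k →
      Fstar ≤ F ((k : ℝ)⁻¹ • ∑ i ∈ Finset.range k, xt (i+1)) := fun k hk =>
    hFstar.1 ⟨_, ⟨⟨(havg k hk).1, hfdom (havg k hk).2⟩, hdomφQ (havg k hk).2⟩, rfl⟩
  have hub : ∀ u ∈ domP ∩ domφ, ∀ k : ℕ, 1 ≤ k →
      F ((k : ℝ)⁻¹ • ∑ i ∈ Finset.range k, xt (i+1))
        ≤ F u + ((k:ℝ)⁻¹ * (L * breg φ gφ u (x 0))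
          + (‖u‖ + 1) * ((k:ℝ)⁻¹ * ∑ i ∈ Finset.range k, η i * (‖xt (i+1)‖ + 1))
          + L * ((k:ℝ)⁻¹ * ∑ i ∈ Finset.range k, μ i)
          + (k:ℝ)⁻¹ * ∑ i ∈ Finset.range k, ν i) := by
    intro u hu k hk
    have hkpos : (0:ℝ) < (k:ℝ) := Nat.cast_pos.2 hk
    have hkne : (k:ℝ) ≠ 0 := hkpos.ne'
    have hJ := hjensen k hk
    have hS := hsum u hu k
    have hS' := mul_le_mul_of_nonneg_left hS (inv_nonneg.2 hkpos.le)
    refine hJ.trans (hS'.trans (le_of_eq ?_))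
    field_simp
    ring
  have hbnd : ∀ u : E, Tendsto (fun k : ℕ => (k:ℝ)⁻¹ * (L * breg φ gφ u (x 0))
      + (‖u‖ + 1) * ((k:ℝ)⁻¹ * ∑ i ∈ Finset.range k, η i * (‖xt (i+1)‖ + 1))
      + L * ((k:ℝ)⁻¹ * ∑ i ∈ Finset.range k, μ i)
      + (k:ℝ)⁻¹ * ∑ i ∈ Finset.range k, ν i) atTop (𝓝 0) := by
    intro u
    have t0 : Tendsto (fun k : ℕ => (k:ℝ)⁻¹) atTop (𝓝 (0:ℝ)) :=
      tendsto_inv_atTop_zero.comp tendsto_natCast_atTop_atTop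
    have := (((t0.mul_const (L * breg φ gφ u (x 0))).add
      (h1.const_mul (‖u‖ + 1))).add (h2.const_mul L)).add h3
    simpa using this
  rw [Metric.tendsto_atTop]
  intro ε hε
  obtain ⟨y, hy, hy2⟩ := hFstar.exists_between (show Fstar < Fstar + ε/4 by linarith)
  obtain ⟨v, hv, rfl⟩ := hy
  obtain ⟨w0, hwP, hwQ⟩ := hPQ
  have hw' : w0 ∈ interior domφ := hIntQsub hwQ
  obtain ⟨t, ht0, ht1, htM⟩ : ∃ t : ℝ, 0 < t ∧ t ≤ 1 ∧ t * (F w0 - F v) ≤ ε/4 := by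
    refine ⟨min 1 ((ε/4) / (|F w0 - F v| + 1)), by positivity, min_le_left _ _, ?_⟩
    have habs : (0:ℝ) ≤ |F w0 - F v| := abs_nonneg _
    have hle : F w0 - F v ≤ |F w0 - F v| := le_abs_self _
    have htpos : (0:ℝ) ≤ min 1 ((ε/4) / (|F w0 - F v| + 1)) := by positivity
    have h5 : min 1 ((ε/4) / (|F w0 - F v| + 1)) * (F w0 - F v)
        ≤ min 1 ((ε/4) / (|F w0 - F v| + 1)) * |F w0 - F v| :=
      mul_le_mul_of_nonneg_left hle htpos
    have h6 : min 1 ((ε/4) / (|F w0 - F v| + 1)) * |F w0 - F v|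
        ≤ ((ε/4) / (|F w0 - F v| + 1)) * |F w0 - F v| :=
      mul_le_mul_of_nonneg_right (min_le_right _ _) habs
    have h7 : ((ε/4) / (|F w0 - F v| + 1)) * |F w0 - F v| ≤ ε/4 := by
      rw [div_mul_eq_mul_div, div_le_iff₀ (by positivity)]
      nlinarith
    linarith
  have hvcl : v ∈ closure domφ := by rw [hφQ]; exact hv.2
  have huφint : t • w0 + (1 - t) • v ∈ interior domφ :=
    hdomφconv.combo_interior_closure_mem_interior hw' hvcl ht0 (by linarith) (by ring)
  have huP : t • w0 + (1 - t) • v ∈ domP :=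
    hPconv.1 hwP hv.1.1 ht0.le (by linarith) (by ring)
  have hu : t • w0 + (1 - t) • v ∈ domP ∩ domφ := ⟨huP, interior_subset huφint⟩
  have hFu : F (t • w0 + (1 - t) • v) ≤ Fstar + ε/2 := by
    have hj := hFconv.2 ⟨hwP, hfdom (interior_subset hw')⟩ hv.1 ht0.le
      (by linarith : (0:ℝ) ≤ 1 - t) (by ring)
    have hvlt : F v < Fstar + ε/4 := hy2.2
    simp only [smul_eq_mul] at hj
    have hexp : t * F w0 + (1 - t) * F v = F v + t * (F w0 - F v) := by ring
    linarith
  obtain ⟨N, hN⟩ := (Metric.tendsto_atTop.1 (hbnd (t • w0 + (1 - t) • v))) (ε/4)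
    (by linarith)
  refine ⟨max N 1, fun k hk => ?_⟩
  have hk1 : 1 ≤ k := le_trans (le_max_right N 1) hk
  have hkN : N ≤ k := le_trans (le_max_left N 1) hk
  have hg := hN k hkN
  rw [Real.dist_eq, sub_zero] at hg
  have hg' := (abs_lt.1 hg).2
  have hup := hub _ hu k hk1
  have hlo := hlb k hk1
  simp only [hFdef] at hup hlo hFu
  rw [Real.dist_eq, abs_lt]
  constructor <;> linarith
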